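/- Let E(t) ∈ R[[t]] satisfy B_t(E(t)) = 0 (the unique solution with zero constant term), and let t, T be related by T = t.φ, i.e. B_T(V) = √(φ'(V)) B_t(φ(V)). Then φ(E(T)) = E(t), where E(T) is regarded as a power series in t via the affine change of variables. -/

import Mathlib

/-- Formal derivative of a power series. -/
noncomputable def d1 {R : Type*} [CommRing R] (f : PowerSeries R) : PowerSeries R :=
  PowerSeries.mk fun n => (n + 1 : ℕ) • PowerSeries.coeff (n + 1) f

/-- Composition of formal power series `f(g(V))`. -/
noncomputable def pcomp {R : Type*} [CommRing R] (f g : PowerSeries R) : PowerSeries R :=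
  PowerSeries.mk fun n => ∑ᶠ k : ℕ, PowerSeries.coeff k f * PowerSeries.coeff n (g ^ k)

/-- `B_t(v) = v - ∑_{i≥0} (t_i / i!) v^i`. -/
noncomputable def Bser {R : Type*} [CommRing R] [Algebra ℚ R] (t : ℕ → R) : PowerSeries R :=
  PowerSeries.mk fun i => (if i = 1 then (1 : R) else 0) - (i.factorial : ℚ)⁻¹ • t i

namespace St5

abbrev K : Type := MvPowerSeries ℕ ℚ

def degd (d : ℕ →₀ ℕ) : ℕ := d.sum fun _ m => m

lemma degd_eq (d : ℕ →₀ ℕ) : degd d = d.sum fun _ m => m := rfl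

lemma degd_add (a b : ℕ →₀ ℕ) : degd (a + b) = degd a + degd b :=
  Finsupp.sum_add_index' (fun _ => rfl) (fun _ _ _ => rfl)

lemma degd_zero : degd 0 = 0 := Finsupp.sum_zero_index

lemma apply_le_degd (d : ℕ →₀ ℕ) (x : ℕ) : d x ≤ degd d := by
  by_cases hx : x ∈ d.support
  · exact Finset.single_le_sum (fun _ _ => Nat.zero_le _) hx
  · simp [Finsupp.notMem_support_iff.mp hx]

lemma eq_zero_of_degd (d : ℕ →₀ ℕ) (h : degd d = 0) : d = 0 := by
  ext x
  simp only [Finsupp.coe_zero, Pi.zero_apply]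
  have := apply_le_degd d x; omega

lemma degd_le_of_le {e d : ℕ →₀ ℕ} (h : e ≤ d) : degd e ≤ degd d := by
  have : d = e + (d - e) := (add_tsub_cancel_of_le h).symm
  rw [this, degd_add]; omega

lemma degd_single (i : ℕ) : degd (Finsupp.single i 1) = 1 := by
  simp [degd, Finsupp.sum_single_index]

lemma coeff_pow_eq_zero {g : K} (hg : MvPowerSeries.constantCoeff g = 0)
    {k : ℕ} {d : ℕ →₀ ℕ} (h : degd d < k) : MvPowerSeries.coeff d (g ^ k) = 0 := by
  induction k generalizing d with
  | zero => omega
  | succ k ih =>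
    rw [pow_succ', MvPowerSeries.coeff_mul]
    refine Finset.sum_eq_zero fun p hp => ?_
    rcases eq_or_ne p.1 0 with h1 | h1
    · rw [h1]; simp [MvPowerSeries.coeff_zero_eq_constantCoeff, hg]
    · have hd : p.1 + p.2 = d := Finset.HasAntidiagonal.mem_antidiagonal.mp hp
      have h2 : 1 ≤ degd p.1 := by
        rcases Nat.eq_zero_or_pos (degd p.1) with h0 | h0
        · exact absurd (eq_zero_of_degd _ h0) h1
        · exact h0
      have : degd p.2 < k := by
        have := degd_add p.1 p.2; rw [hd] at this; omega
      rw [ih this, mul_zero]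

lemma coeff_mul_pow_eq_zero {g : K} (hg : MvPowerSeries.constantCoeff g = 0)
    (c : K) {k : ℕ} {d : ℕ →₀ ℕ} (h : degd d < k) :
    MvPowerSeries.coeff d (c * g ^ k) = 0 := by
  rw [MvPowerSeries.coeff_mul]
  refine Finset.sum_eq_zero fun p hp => ?_
  have hd : p.1 + p.2 = d := Finset.HasAntidiagonal.mem_antidiagonal.mp hp
  have : degd p.2 < k := by have := degd_add p.1 p.2; rw [hd] at this; omega
  rw [coeff_pow_eq_zero hg this, mul_zero]

lemma pcoeff_pow_eq_zero {ψ : PowerSeries K} (h : PowerSeries.constantCoeff ψ = 0)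
    {k n : ℕ} (hn : n < k) : PowerSeries.coeff n (ψ ^ k) = 0 := by
  have hdvd : (PowerSeries.X : PowerSeries K) ^ k ∣ ψ ^ k :=
    pow_dvd_pow_of_dvd (PowerSeries.X_dvd_iff.mpr h) k
  exact PowerSeries.X_pow_dvd_iff.mp hdvd n hn

noncomputable def Ssum (g : K) (N : ℕ) (f : PowerSeries K) : K :=
  Polynomial.eval g (PowerSeries.trunc N f)

lemma natDegree_trunc_lt (f : PowerSeries K) {N : ℕ} (hN : 0 < N) :
    (PowerSeries.trunc N f).natDegree < N := by
  rcases eq_or_ne (PowerSeries.trunc N f) 0 with h | h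
  · simpa [h] using hN
  · exact (Polynomial.natDegree_lt_iff_degree_lt h).mpr (PowerSeries.degree_trunc_lt f N)

lemma coeff_Ssum (g : K) {N : ℕ} (hN : 0 < N) (f : PowerSeries K) (d : ℕ →₀ ℕ) :
    MvPowerSeries.coeff d (Ssum g N f) =
      ∑ k ∈ Finset.range N, MvPowerSeries.coeff d (PowerSeries.coeff k f * g ^ k) := by
  rw [Ssum, Polynomial.eval_eq_sum_range' (natDegree_trunc_lt f hN), map_sum]
  refine Finset.sum_congr rfl fun k hk => ?_
  rw [PowerSeries.coeff_trunc, if_pos (Finset.mem_range.mp hk)]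

section
variable {g : K} (hg : MvPowerSeries.constantCoeff g = 0)

include hg in
lemma coeff_eval_eq_zero (r : Polynomial K) {N : ℕ} (hr : ∀ k < N, r.coeff k = 0)
    {d : ℕ →₀ ℕ} (hd : degd d < N) : MvPowerSeries.coeff d (r.eval g) = 0 := by
  rw [Polynomial.eval_eq_sum, Polynomial.sum, map_sum]
  refine Finset.sum_eq_zero fun k hk => ?_
  have hkN : N ≤ k := by
    by_contra h
    exact Polynomial.mem_support_iff.mp hk (hr k (by omega))
  exact coeff_mul_pow_eq_zero hg _ (by omega)

include hg in
lemma coeff_eval_congr {p q : Polynomial K} {N : ℕ} (h : ∀ k < N, p.coeff k = q.coeff k)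
    {d : ℕ →₀ ℕ} (hd : degd d < N) :
    MvPowerSeries.coeff d (p.eval g) = MvPowerSeries.coeff d (q.eval g) := by
  have h0 : MvPowerSeries.coeff d ((p - q).eval g) = 0 :=
    coeff_eval_eq_zero hg _ (fun k hk => by rw [Polynomial.coeff_sub, h k hk, sub_self]) hd
  rw [Polynomial.eval_sub, map_sub, sub_eq_zero] at h0
  exact h0

include hg in
lemma coeff_Ssum_stable (f : PowerSeries K) {N : ℕ} {d : ℕ →₀ ℕ} (hd : degd d < N) :
    MvPowerSeries.coeff d (Ssum g N f) =
      MvPowerSeries.coeff d (Ssum g (degd d + 1) f) := by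
  rw [coeff_Ssum g (by omega) f d, coeff_Ssum g (by omega) f d]
  rw [← Finset.sum_subset (Finset.range_subset_range.mpr (by omega : degd d + 1 ≤ N))]
  intro k hk hk'
  exact coeff_mul_pow_eq_zero hg _ (by simp at hk hk'; omega)

end

/-- Evaluation of a power series over `K` at `g ∈ K` of positive order. -/
noncomputable def Ev (g : K) (f : PowerSeries K) : K :=
  fun d => MvPowerSeries.coeff d (Ssum g (degd d + 1) f)

lemma coeff_Ev (g : K) (f : PowerSeries K) (d : ℕ →₀ ℕ) :
    MvPowerSeries.coeff d (Ev g f) =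
      MvPowerSeries.coeff d (Ssum g (degd d + 1) f) := rfl

section
variable {g : K} (hg : MvPowerSeries.constantCoeff g = 0)

include hg in
lemma coeff_Ev_eq {N : ℕ} {d : ℕ →₀ ℕ} (hd : degd d < N) (f : PowerSeries K) :
    MvPowerSeries.coeff d (Ev g f) = MvPowerSeries.coeff d (Ssum g N f) := by
  rw [coeff_Ev, coeff_Ssum_stable hg f hd]

lemma Ev_one : Ev g (1 : PowerSeries K) = 1 := by
  ext d
  rw [coeff_Ev, Ssum, PowerSeries.trunc_one, Polynomial.eval_one]

lemma Ev_zero : Ev g (0 : PowerSeries K) = 0 := by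
  ext d
  rw [coeff_Ev, Ssum, map_zero, Polynomial.eval_zero]

lemma Ev_add (f₁ f₂ : PowerSeries K) : Ev g (f₁ + f₂) = Ev g f₁ + Ev g f₂ := by
  ext d
  rw [map_add, coeff_Ev, coeff_Ev, coeff_Ev, Ssum, Ssum, Ssum, map_add,
    Polynomial.eval_add, map_add]

include hg in
lemma Ev_mul (f₁ f₂ : PowerSeries K) : Ev g (f₁ * f₂) = Ev g f₁ * Ev g f₂ := by
  ext d
  set N := degd d + 1 with hN
  have key : ∀ k < N, (PowerSeries.trunc N (f₁ * f₂)).coeff k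
      = (PowerSeries.trunc N f₁ * PowerSeries.trunc N f₂).coeff k := by
    intro k hk
    rw [PowerSeries.coeff_trunc, if_pos hk, PowerSeries.coeff_mul, Polynomial.coeff_mul]
    refine Finset.sum_congr rfl fun p hp => ?_
    have hpk : p.1 + p.2 = k := Finset.HasAntidiagonal.mem_antidiagonal.mp hp
    rw [PowerSeries.coeff_trunc, PowerSeries.coeff_trunc, if_pos (by omega), if_pos (by omega)]
  calc MvPowerSeries.coeff d (Ev g (f₁ * f₂))
      = MvPowerSeries.coeff d ((PowerSeries.trunc N f₁ * PowerSeries.trunc N f₂).eval g) := by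
        rw [coeff_Ev]; exact coeff_eval_congr hg key (by omega)
    _ = MvPowerSeries.coeff d (Ssum g N f₁ * Ssum g N f₂) := by
        rw [Polynomial.eval_mul]; rfl
    _ = MvPowerSeries.coeff d (Ev g f₁ * Ev g f₂) := by
        rw [MvPowerSeries.coeff_mul, MvPowerSeries.coeff_mul]
        refine Finset.sum_congr rfl fun p hp => ?_
        have hpd : p.1 + p.2 = d := Finset.HasAntidiagonal.mem_antidiagonal.mp hp
        have h1 : degd p.1 < N := by
          have : p.1 ≤ d := hpd ▸ self_le_add_right p.1 p.2
          have := degd_le_of_le this; omega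
        have h2 : degd p.2 < N := by
          have : p.2 ≤ d := hpd ▸ self_le_add_left p.2 p.1
          have := degd_le_of_le this; omega
        rw [← coeff_Ev_eq hg h1 f₁, ← coeff_Ev_eq hg h2 f₂]

lemma Ev_C (a : K) : Ev g (PowerSeries.C a) = a := by
  ext d
  rw [coeff_Ev, Ssum, PowerSeries.trunc_C, Polynomial.eval_C]

end

/-- `Ev g` bundled as a ring homomorphism. -/
noncomputable def EvHom (g : K) (hg : MvPowerSeries.constantCoeff g = 0) :
    PowerSeries K →+* K where
  toFun := Ev g
  map_one' := Ev_one
  map_mul' := Ev_mul hg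
  map_zero' := Ev_zero
  map_add' := Ev_add

lemma EvHom_apply (g : K) (hg) (f : PowerSeries K) : EvHom g hg f = Ev g f := rfl

/-- `Ev g (Bser t)` coefficientwise. -/
lemma coeff_Ev_Bser (t : ℕ → K) {g : K} (hg : MvPowerSeries.constantCoeff g = 0)
    (d : ℕ →₀ ℕ) :
    MvPowerSeries.coeff d (Ev g (Bser t)) =
      MvPowerSeries.coeff d g -
        ∑ i ∈ Finset.range (degd d + 1),
          (i.factorial : ℚ)⁻¹ * MvPowerSeries.coeff d (t i * g ^ i) := by
  rw [coeff_Ev, coeff_Ssum g (by omega) _ d]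
  have hterm : ∀ k, MvPowerSeries.coeff d (PowerSeries.coeff k (Bser t) * g ^ k) =
      (if k = 1 then MvPowerSeries.coeff d g else 0)
        - (k.factorial : ℚ)⁻¹ * MvPowerSeries.coeff d (t k * g ^ k) := by
    intro k
    rw [Bser, PowerSeries.coeff_mk, sub_mul, map_sub, smul_mul_assoc, map_smul, smul_eq_mul]
    congr 1
    split
    · rename_i h; subst h; rw [one_mul, pow_one]
    · rw [zero_mul, map_zero]
  rw [Finset.sum_congr rfl fun k _ => hterm k, Finset.sum_sub_distrib]
  congr 1
  rw [Finset.sum_ite_eq' (Finset.range (degd d + 1)) 1 (fun _ => MvPowerSeries.coeff d g)]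
  split
  · rfl
  · rename_i h
    have hd0 : degd d = 0 := by simp at h; omega
    have : d = 0 := eq_zero_of_degd d hd0
    subst this
    rw [MvPowerSeries.coeff_zero_eq_constantCoeff, hg]

/-- Coefficients of powers only depend on smaller coefficients. -/
lemma pow_coeff_congr {E1 E2 : K} :
    ∀ (i : ℕ) (d : ℕ →₀ ℕ), (∀ e ≤ d, MvPowerSeries.coeff e E1 = MvPowerSeries.coeff e E2) →
      MvPowerSeries.coeff d (E1 ^ i) = MvPowerSeries.coeff d (E2 ^ i) := by
  intro i
  induction i with
  | zero => intro d _; rfl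
  | succ i ih =>
    intro d hd
    rw [pow_succ', pow_succ', MvPowerSeries.coeff_mul, MvPowerSeries.coeff_mul]
    refine Finset.sum_congr rfl fun p hp => ?_
    have hpd : p.1 + p.2 = d := Finset.HasAntidiagonal.mem_antidiagonal.mp hp
    have h1 : p.1 ≤ d := hpd ▸ self_le_add_right p.1 p.2
    have h2 : p.2 ≤ d := hpd ▸ self_le_add_left p.2 p.1
    rw [hd p.1 h1, ih p.2 (fun e he => hd e (le_trans he h2))]

end St5

open St5 in
theorem phi_of_E_T_eq_E_t
    (φ : PowerSeries ℚ)
    (hφ0 : PowerSeries.constantCoeff φ = 0) (hφ1 : PowerSeries.coeff 1 φ = 1)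
    (s : PowerSeries (MvPowerSeries ℕ ℚ))
    (hs2 : s ^ 2 = d1 (PowerSeries.map (algebraMap ℚ (MvPowerSeries ℕ ℚ)) φ))
    (hs0 : PowerSeries.constantCoeff s = 1)
    (T : ℕ → MvPowerSeries ℕ ℚ)
    (hT : ∀ i, T i = (i.factorial : ℚ) •
      ((if i = 1 then (1 : MvPowerSeries ℕ ℚ) else 0) -
        PowerSeries.coeff i
          (s * pcomp (Bser fun j => (MvPowerSeries.X j : MvPowerSeries ℕ ℚ))
            (PowerSeries.map (algebraMap ℚ (MvPowerSeries ℕ ℚ)) φ))))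
    (E Ebar : MvPowerSeries ℕ ℚ)
    (hE0 : MvPowerSeries.constantCoeff E = 0)
    (hE : ∀ d : ℕ →₀ ℕ, MvPowerSeries.coeff d E =
      ∑ i ∈ Finset.range ((d.sum fun _ m => m) + 1),
        (i.factorial : ℚ)⁻¹ * MvPowerSeries.coeff d (MvPowerSeries.X i * E ^ i))
    (hEb0 : MvPowerSeries.constantCoeff Ebar = 0)
    (hEb : ∀ d : ℕ →₀ ℕ, MvPowerSeries.coeff d Ebar =
      ∑ i ∈ Finset.range ((d.sum fun _ m => m) + 1),
        (i.factorial : ℚ)⁻¹ * MvPowerSeries.coeff d (T i * Ebar ^ i)) :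
    ∀ d : ℕ →₀ ℕ, MvPowerSeries.coeff d E =
      ∑ k ∈ Finset.range ((d.sum fun _ m => m) + 1),
        PowerSeries.coeff k φ * MvPowerSeries.coeff d (Ebar ^ k) := by
  classical
  set φh : PowerSeries K := PowerSeries.map (algebraMap ℚ K) φ with hφh
  have hφh0 : PowerSeries.constantCoeff φh = 0 := by
    rw [← PowerSeries.coeff_zero_eq_constantCoeff_apply, hφh, PowerSeries.coeff_map,
      PowerSeries.coeff_zero_eq_constantCoeff_apply, hφ0, map_zero]
  have hc0 : PowerSeries.coeff 0 φh = 0 := by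
    rw [PowerSeries.coeff_zero_eq_constantCoeff_apply, hφh0]
  set A : PowerSeries K := Bser fun j => (MvPowerSeries.X j : K) with hA
  set Q : PowerSeries K := pcomp A φh with hQ
  set F : K := Ev Ebar φh with hFdef
  -- constant coefficient of F is 0
  have hF0 : MvPowerSeries.constantCoeff F = 0 := by
    rw [← MvPowerSeries.coeff_zero_eq_constantCoeff_apply, hFdef, coeff_Ev,
      coeff_Ssum Ebar (by omega) _ 0]
    rw [degd_zero]
    simp only [zero_add, Finset.range_one, Finset.sum_singleton, pow_zero, mul_one]
    rw [hc0, map_zero]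
  -- Step A : Ev Ebar (Bser T) = 0
  have hEvBT : Ev Ebar (Bser T) = 0 := by
    ext d
    rw [coeff_Ev_Bser T hEb0 d, map_zero]
    simp only [← degd_eq] at hEb
    rw [hEb d, sub_self]
  -- Step B : Bser T = s * Q
  have hBT : Bser T = s * Q := by
    ext k
    rw [Bser, PowerSeries.coeff_mk, hT k, smul_smul,
      inv_mul_cancel₀ (by exact_mod_cast k.factorial_ne_zero : (k.factorial : ℚ) ≠ 0),
      one_smul, sub_sub_cancel]
  -- Step C : Ev Ebar s * Ev Ebar Q = 0
  have hC : Ev Ebar s * Ev Ebar Q = 0 := by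
    rw [← Ev_mul hEb0, ← hBT, hEvBT]
  -- Step E : Ev Ebar s ≠ 0
  have hsne : Ev Ebar s ≠ 0 := by
    intro h
    have h1 : MvPowerSeries.coeff 0 (Ev Ebar s) = 1 := by
      rw [coeff_Ev, coeff_Ssum Ebar (by omega) _ 0, degd_zero]
      simp only [zero_add, Finset.range_one, Finset.sum_singleton, pow_zero, mul_one]
      rw [PowerSeries.coeff_zero_eq_constantCoeff_apply, hs0,
        MvPowerSeries.coeff_zero_eq_constantCoeff_apply, map_one]
    rw [h, map_zero] at h1
    exact one_ne_zero h1.symm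
  have hQ0 : Ev Ebar Q = 0 := by
    rcases mul_eq_zero.mp hC with h | h
    · exact absurd h hsne
    · exact h
  -- Step D : Ev Ebar Q = Ev F A
  have hQF : Ev Ebar Q = Ev F A := by
    ext d
    set N := degd d + 1 with hN
    set R : PowerSeries K :=
      ∑ j ∈ Finset.range N, PowerSeries.C (PowerSeries.coeff j A) * φh ^ j with hR
    have hQR : ∀ k < N, PowerSeries.coeff k Q = PowerSeries.coeff k R := by
      intro k hk
      have hsupp : (Function.support fun j =>
          PowerSeries.coeff j A * PowerSeries.coeff k (φh ^ j)) ⊆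
          ↑(Finset.range N) := by
        intro j hj
        simp only [Function.mem_support] at hj
        by_contra hjN
        simp only [Finset.coe_range, Set.mem_Iio, not_lt] at hjN
        exact hj (by rw [pcoeff_pow_eq_zero hφh0 (by omega), mul_zero])
      rw [hQ, pcomp, PowerSeries.coeff_mk,
        finsum_eq_sum_of_support_subset _ hsupp, hR, map_sum]
      exact Finset.sum_congr rfl fun j _ => (PowerSeries.coeff_C_mul k (φh ^ j) _).symm
    have hL : MvPowerSeries.coeff d (Ev Ebar Q) = MvPowerSeries.coeff d (Ev Ebar R) := by
      rw [coeff_Ev, coeff_Ev, coeff_Ssum Ebar (by omega) _ d, coeff_Ssum Ebar (by omega) _ d]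
      exact Finset.sum_congr rfl fun k hk => by
        rw [hQR k (Finset.mem_range.mp hk)]
    have hEvR : Ev Ebar R = ∑ j ∈ Finset.range N, PowerSeries.coeff j A * F ^ j := by
      rw [← EvHom_apply Ebar hEb0, hR, map_sum]
      exact Finset.sum_congr rfl fun j _ => by
        rw [map_mul, map_pow, EvHom_apply, EvHom_apply, Ev_C, hFdef]
    rw [hL, hEvR, coeff_Ev, coeff_Ssum F (by omega) _ d, map_sum]
  have hEvFA : Ev F A = 0 := by rw [← hQF, hQ0]
  -- Step F : F satisfies the same equation as E
  have hFE : ∀ d : ℕ →₀ ℕ, MvPowerSeries.coeff d F =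
      ∑ i ∈ Finset.range (degd d + 1),
        (i.factorial : ℚ)⁻¹ * MvPowerSeries.coeff d (MvPowerSeries.X i * F ^ i) := by
    intro d
    have := coeff_Ev_Bser (fun j => (MvPowerSeries.X j : K)) hF0 d
    rw [← hA, hEvFA, map_zero] at this
    linarith [this]
  -- Step G : uniqueness induction
  have huniq : ∀ n : ℕ, ∀ d : ℕ →₀ ℕ, degd d ≤ n →
      MvPowerSeries.coeff d E = MvPowerSeries.coeff d F := by
    intro n
    induction n with
    | zero =>
      intro d hd
      have : d = 0 := eq_zero_of_degd d (Nat.le_zero.mp hd)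
      subst this
      rw [MvPowerSeries.coeff_zero_eq_constantCoeff_apply, MvPowerSeries.coeff_zero_eq_constantCoeff_apply, hE0, hF0]
    | succ n ih =>
      intro d hd
      rcases le_or_gt (degd d) n with h | h
      · exact ih d h
      · have hdn : degd d = n + 1 := by omega
        simp only [← degd_eq] at hE
        rw [hE d, hFE d]
        refine Finset.sum_congr rfl fun i _ => ?_
        congr 1
        rw [MvPowerSeries.X_def, MvPowerSeries.coeff_monomial_mul, MvPowerSeries.coeff_monomial_mul]
        split
        · rename_i hle
          rw [one_mul, one_mul]
          set d' := d - Finsupp.single i 1 with hd'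
          have hdd' : degd d' ≤ n := by
            have hsum : d = Finsupp.single i 1 + d' :=
              (add_tsub_cancel_of_le hle).symm
            have := degd_add (Finsupp.single i 1) d'
            rw [← hsum, degd_single] at this
            omega
          refine pow_coeff_congr i d' fun e he => ?_
          exact ih e (le_trans (degd_le_of_le he) hdd')
        · rfl
  -- Conclusion
  intro d
  rw [← degd_eq]
  have h1 : MvPowerSeries.coeff d E = MvPowerSeries.coeff d F := huniq (degd d) d le_rfl
  rw [h1, hFdef, coeff_Ev, coeff_Ssum Ebar (by omega) _ d]
  refine Finset.sum_congr rfl fun k _ => ?_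
  rw [hφh, PowerSeries.coeff_map, ← Algebra.smul_def, map_smul, smul_eq_mul]
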